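/- (Small gain theorem, global version) Consider the equation y = Δ(y) + w in sequence space, where Δ is strictly causal and satisfies ‖Δ(x)‖_p ≤ γ‖x‖_p + β for all x ∈ ℓⁿ_p, with 0 ≤ γ < 1 and β ≥ 0. Then for every w ∈ ℓⁿ_p the unique solution y = (I - Δ)⁻¹(w) satisfies ‖y‖_p ≤ (‖w‖_p + β)/(1 - γ). -/

import Mathlib

open scoped ENNReal NNReal

/-- The ℓ_p norm of a sequence, valued in `ℝ≥0∞` (sup norm for `p = ∞`). -/
noncomputable def pNorm (p : ℝ≥0∞) {E : Type*} [NormedAddCommGroup E] (x : ℕ → E) : ℝ≥0∞ :=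
  if p = ∞ then ⨆ k, (‖x k‖₊ : ℝ≥0∞)
  else (∑' k, (‖x k‖₊ : ℝ≥0∞) ^ p.toReal) ^ (1 / p.toReal)

/-- A strictly causal operator: the t-th output depends only on inputs 0..t-1. -/
def StrictlyCausal {E F : Type*} (Q : (ℕ → E) → (ℕ → F)) : Prop :=
  ∀ x y : ℕ → E, ∀ t, (∀ s, s < t → x s = y s) → Q x t = Q y t

/-- Solution of the fixed point equation, defined by strong recursion. -/
noncomputable def sgSol {E : Type*} [NormedAddCommGroup E]
    (Δ : (ℕ → E) → (ℕ → E)) (w : ℕ → E) : ℕ → E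
  | t => Δ (fun s => if h : s < t then sgSol Δ w s else 0) t + w t
decreasing_by exact h

lemma ennreal_Lp_add_le_tsum {q : ℝ} (hq : 1 ≤ q) (f g : ℕ → ℝ≥0∞) :
    (∑' k, (f k + g k) ^ q) ^ (1 / q) ≤
      (∑' k, f k ^ q) ^ (1 / q) + (∑' k, g k ^ q) ^ (1 / q) := by
  have hq0 : 0 < q := lt_of_lt_of_le one_pos hq
  set A := (∑' k, f k ^ q) ^ (1 / q)
  set B := (∑' k, g k ^ q) ^ (1 / q)
  have key : ∀ s : Finset ℕ, ∑ i ∈ s, (f i + g i) ^ q ≤ (A + B) ^ q := by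
    intro s
    have h1 := ENNReal.Lp_add_le s f g hq
    have h2 : (∑ i ∈ s, f i ^ q) ^ (1 / q) ≤ A :=
      ENNReal.rpow_le_rpow (ENNReal.sum_le_tsum s) (by positivity)
    have h3 : (∑ i ∈ s, g i ^ q) ^ (1 / q) ≤ B :=
      ENNReal.rpow_le_rpow (ENNReal.sum_le_tsum s) (by positivity)
    calc ∑ i ∈ s, (f i + g i) ^ q
        = ((∑ i ∈ s, (f i + g i) ^ q) ^ (1 / q)) ^ q := by
          rw [← ENNReal.rpow_mul, one_div, inv_mul_cancel₀ hq0.ne', ENNReal.rpow_one]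
      _ ≤ (A + B) ^ q :=
          ENNReal.rpow_le_rpow (h1.trans (add_le_add h2 h3)) hq0.le
  have : ∑' k, (f k + g k) ^ q ≤ (A + B) ^ q := by
    rw [ENNReal.tsum_eq_iSup_sum]; exact iSup_le key
  calc (∑' k, (f k + g k) ^ q) ^ (1 / q)
      ≤ ((A + B) ^ q) ^ (1 / q) := ENNReal.rpow_le_rpow this (by positivity)
    _ = A + B := by
        rw [← ENNReal.rpow_mul, mul_one_div, div_self hq0.ne', ENNReal.rpow_one]

lemma pNorm_mono {E : Type*} [NormedAddCommGroup E] {p : ℝ≥0∞}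
    {x z : ℕ → E} (h : ∀ k, ‖x k‖₊ ≤ ‖z k‖₊) : pNorm p x ≤ pNorm p z := by
  unfold pNorm
  split
  · exact iSup_mono fun k => ENNReal.coe_le_coe.2 (h k)
  · refine ENNReal.rpow_le_rpow (ENNReal.tsum_le_tsum fun k => ?_) (by positivity)
    exact ENNReal.rpow_le_rpow (ENNReal.coe_le_coe.2 (h k)) ENNReal.toReal_nonneg

lemma pNorm_add_le {E : Type*} [NormedAddCommGroup E] {p : ℝ≥0∞} (hp : 1 ≤ p)
    (x z : ℕ → E) : pNorm p (fun k => x k + z k) ≤ pNorm p x + pNorm p z := by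
  by_cases hptop : p = ∞
  · simp only [pNorm, if_pos hptop]
    refine iSup_le fun k => ?_
    calc (‖x k + z k‖₊ : ℝ≥0∞) ≤ (‖x k‖₊ : ℝ≥0∞) + ‖z k‖₊ := by
          exact_mod_cast nnnorm_add_le (x k) (z k)
      _ ≤ _ := add_le_add (le_iSup (fun k => (‖x k‖₊ : ℝ≥0∞)) k)
          (le_iSup (fun k => (‖z k‖₊ : ℝ≥0∞)) k)
  · simp only [pNorm, if_neg hptop]
    have hq : 1 ≤ p.toReal := by
      rw [← ENNReal.toReal_one]; exact ENNReal.toReal_mono hptop hp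
    refine le_trans ?_ (ennreal_Lp_add_le_tsum hq (fun k => (‖x k‖₊ : ℝ≥0∞))
      (fun k => (‖z k‖₊ : ℝ≥0∞)))
    refine ENNReal.rpow_le_rpow (ENNReal.tsum_le_tsum fun k => ?_) (by positivity)
    refine ENNReal.rpow_le_rpow ?_ ENNReal.toReal_nonneg
    exact_mod_cast nnnorm_add_le (x k) (z k)

lemma pNorm_trunc_lt_top {E : Type*} [NormedAddCommGroup E] {p : ℝ≥0∞} (hp : 1 ≤ p)
    (T : ℕ) (x : ℕ → E) : pNorm p (fun k => if k < T then x k else 0) < ∞ := by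
  by_cases hptop : p = ∞
  · simp only [pNorm, if_pos hptop]
    have : (⨆ k, (‖if k < T then x k else 0‖₊ : ℝ≥0∞)) ≤
        ∑ k ∈ Finset.range T, (‖x k‖₊ : ℝ≥0∞) := by
      refine iSup_le fun k => ?_
      by_cases h : k < T
      · simp only [if_pos h]
        exact Finset.single_le_sum (f := fun k => (‖x k‖₊ : ℝ≥0∞))
          (fun _ _ => zero_le) (Finset.mem_range.2 h)
      · simp [h]
    exact this.trans_lt (ENNReal.sum_lt_top.2 fun _ _ => ENNReal.coe_lt_top)
  · simp only [pNorm, if_neg hptop]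
    have hq0 : 0 < p.toReal := by
      have : 1 ≤ p.toReal := by
        rw [← ENNReal.toReal_one]; exact ENNReal.toReal_mono hptop hp
      linarith
    have hsum : (∑' k, (‖if k < T then x k else 0‖₊ : ℝ≥0∞) ^ p.toReal) =
        ∑ k ∈ Finset.range T, (‖if k < T then x k else 0‖₊ : ℝ≥0∞) ^ p.toReal := by
      refine tsum_eq_sum fun k hk => ?_
      have : ¬ k < T := fun h => hk (Finset.mem_range.2 h)
      simp [this, ENNReal.zero_rpow_of_pos hq0]
    refine ENNReal.rpow_lt_top_of_nonneg (by positivity) ?_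
    rw [hsum]
    exact (ENNReal.sum_lt_top.2 fun _ _ =>
      ENNReal.rpow_lt_top_of_nonneg hq0.le ENNReal.coe_ne_top).ne

lemma pNorm_le_of_trunc {E : Type*} [NormedAddCommGroup E] {p : ℝ≥0∞} (hp : 1 ≤ p)
    {y : ℕ → E} {C : ℝ≥0∞}
    (hC : ∀ T, pNorm p (fun k => if k < T then y k else 0) ≤ C) :
    pNorm p y ≤ C := by
  by_cases hptop : p = ∞
  · simp only [pNorm, if_pos hptop] at hC ⊢
    refine iSup_le fun k => ?_
    refine le_trans ?_ (hC (k + 1))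
    have : (‖y k‖₊ : ℝ≥0∞) = ‖if k < k + 1 then y k else 0‖₊ := by simp
    rw [this]
    exact le_iSup (fun j => (‖if j < k + 1 then y j else 0‖₊ : ℝ≥0∞)) k
  · simp only [pNorm, if_neg hptop] at hC ⊢
    have hq0 : 0 < p.toReal := by
      have : 1 ≤ p.toReal := by
        rw [← ENNReal.toReal_one]; exact ENNReal.toReal_mono hptop hp
      linarith
    have key : ∑' k, (‖y k‖₊ : ℝ≥0∞) ^ p.toReal ≤ C ^ p.toReal := by
      rw [ENNReal.tsum_eq_iSup_sum]
      refine iSup_le fun s => ?_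
      set T := s.sup id + 1 with hT
      have hsub : s ⊆ Finset.range T := by
        intro k hk
        exact Finset.mem_range.2 (Nat.lt_succ_of_le (Finset.le_sup (f := id) hk))
      have h1 : ∑ k ∈ s, (‖y k‖₊ : ℝ≥0∞) ^ p.toReal ≤
          ∑ k ∈ Finset.range T, (‖y k‖₊ : ℝ≥0∞) ^ p.toReal :=
        Finset.sum_le_sum_of_subset hsub
      have h2 : ∑ k ∈ Finset.range T, (‖y k‖₊ : ℝ≥0∞) ^ p.toReal =
          ∑' k, (‖if k < T then y k else 0‖₊ : ℝ≥0∞) ^ p.toReal := by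
        rw [tsum_eq_sum (s := Finset.range T) (fun k hk => by
          have : ¬ k < T := fun h => hk (Finset.mem_range.2 h)
          simp [this, ENNReal.zero_rpow_of_pos hq0])]
        refine Finset.sum_congr rfl fun k hk => by
          rw [if_pos (Finset.mem_range.1 hk)]
      have h3 : ∑' k, (‖if k < T then y k else 0‖₊ : ℝ≥0∞) ^ p.toReal ≤ C ^ p.toReal := by
        have := hC T
        calc ∑' k, (‖if k < T then y k else 0‖₊ : ℝ≥0∞) ^ p.toReal
            = ((∑' k, (‖if k < T then y k else 0‖₊ : ℝ≥0∞) ^ p.toReal) ^ (1 / p.toReal))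
              ^ p.toReal := by
              rw [← ENNReal.rpow_mul, one_div, inv_mul_cancel₀ hq0.ne', ENNReal.rpow_one]
          _ ≤ C ^ p.toReal := ENNReal.rpow_le_rpow this hq0.le
      exact (h1.trans_eq h2).trans h3
    calc (∑' k, (‖y k‖₊ : ℝ≥0∞) ^ p.toReal) ^ (1 / p.toReal)
        ≤ (C ^ p.toReal) ^ (1 / p.toReal) := ENNReal.rpow_le_rpow key (by positivity)
      _ = C := by
          rw [← ENNReal.rpow_mul, mul_one_div, div_self hq0.ne', ENNReal.rpow_one]

lemma ennreal_small_gain_arith {a c : ℝ≥0∞} {γ : ℝ≥0} (hγ : γ < 1) (ha : a ≠ ∞)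
    (h : a ≤ γ * a + c) : a ≤ c / (1 - (γ : ℝ≥0∞)) := by
  have hγ1 : (γ : ℝ≥0∞) ≤ 1 := by exact_mod_cast hγ.le
  have h1 : (0 : ℝ≥0∞) < 1 - γ := tsub_pos_of_lt (by exact_mod_cast hγ)
  have h2 : (1 : ℝ≥0∞) - γ ≠ ∞ := (tsub_le_self.trans_lt ENNReal.one_lt_top).ne
  rw [ENNReal.le_div_iff_mul_le (Or.inl h1.ne') (Or.inl h2)]
  have hfin : a * γ ≠ ∞ := ENNReal.mul_ne_top ha ENNReal.coe_ne_top
  have key : a * (1 - γ) + a * γ ≤ c + a * γ := by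
    rw [← mul_add, tsub_add_cancel_of_le hγ1, mul_one]
    calc a ≤ γ * a + c := h
      _ = c + a * γ := by ring
  exact (ENNReal.add_le_add_iff_right hfin).1 key

theorem global_small_gain {E : Type*} [NormedAddCommGroup E]
    (p : ℝ≥0∞) (hp : 1 ≤ p)
    (Δ : (ℕ → E) → (ℕ → E)) (hΔc : StrictlyCausal Δ)
    (γ β : ℝ≥0) (hγ : γ < 1)
    (hΔ : ∀ x : ℕ → E, pNorm p x < ∞ → pNorm p (Δ x) ≤ γ * pNorm p x + β)
    (w : ℕ → E) (hw : pNorm p w < ∞) :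
    (∃! y : ℕ → E, ∀ t, y t = Δ y t + w t) ∧
    ∀ y : ℕ → E, (∀ t, y t = Δ y t + w t) →
      pNorm p y ≤ (pNorm p w + β) / (1 - (γ : ℝ≥0∞)) := by
  constructor
  · refine ⟨sgSol Δ w, fun t => ?_, fun y hy => funext fun t => ?_⟩
    · rw [sgSol]
      congr 1
      exact hΔc _ (sgSol Δ w) t fun s hs => dif_pos hs
    · induction t using Nat.strong_induction_on with
      | _ t ih =>
        rw [hy t, sgSol]
        congr 1
        exact hΔc y (fun s => if h : s < t then sgSol Δ w s else 0) t fun s hs => by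
          show y s = if h : s < t then sgSol Δ w s else 0
          rw [dif_pos hs]; exact ih s hs
  · intro y hy
    refine pNorm_le_of_trunc hp fun T => ?_
    set yT : ℕ → E := fun k => if k < T then y k else 0 with hyT
    have hfin : pNorm p yT < ∞ := pNorm_trunc_lt_top hp T y
    have heq : yT = fun k => (if k < T then Δ yT k else 0) + (if k < T then w k else 0) := by
      funext k
      by_cases h : k < T
      · simp only [hyT, if_pos h]
        rw [hy k]
        congr 1
        exact (hΔc yT y k fun s hs => if_pos (hs.trans h)).symm
      · simp [hyT, h]
    have key : pNorm p yT ≤ γ * pNorm p yT + (pNorm p w + β) := by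
      calc pNorm p yT
          ≤ pNorm p (fun k => if k < T then Δ yT k else 0) +
            pNorm p (fun k => if k < T then w k else 0) := by
            conv_lhs => rw [heq]
            exact pNorm_add_le hp _ _
        _ ≤ pNorm p (Δ yT) + pNorm p w := by
            refine add_le_add (pNorm_mono fun k => ?_) (pNorm_mono fun k => ?_) <;>
              · by_cases h : k < T <;> simp [h]
        _ ≤ (γ * pNorm p yT + β) + pNorm p w := by
            exact add_le_add_left (hΔ yT hfin) _
        _ = γ * pNorm p yT + (pNorm p w + β) := by ring
    exact ennreal_small_gain_arith hγ hfin.ne key
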